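/- Let F be a field, let C ∈ F^{r×r} be an invertible symmetric matrix, let Q ∈ F^{m×r} be any matrix, and let P ∈ F^{m×r}. Define the block matrix B = [[C, CPᵀ + Qᵀ], [PC + Q, PCPᵀ + PQᵀ + QPᵀ]] ∈ F^{(r+m)×(r+m)}. Then B is symmetric and rank(B) ≤ rank(C) + 2·rank(Q). -/

import Mathlib

open Matrix

lemma myrank_add_le {F : Type*} [Field F] {m n : Type*} [Fintype m] [Fintype n]
    (A B : Matrix m n F) : (A + B).rank ≤ A.rank + B.rank := by
  rw [Matrix.rank, Matrix.rank, Matrix.rank, Matrix.mulVecLin_add]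
  refine le_trans (Submodule.finrank_mono ?_) (Submodule.finrank_add_le_finrank_add_finrank _ _)
  intro x hx
  obtain ⟨y, rfl⟩ := hx
  exact Submodule.add_mem_sup (LinearMap.mem_range_self _ y) (LinearMap.mem_range_self _ y)

lemma myrank_fromRows_le {F : Type*} [Field F] {m₁ m₂ n : Type*} [Fintype m₁] [Fintype m₂]
    [Fintype n] [DecidableEq m₁] [DecidableEq m₂] (A₁ : Matrix m₁ n F) (A₂ : Matrix m₂ n F) :
    (fromRows A₁ A₂).rank ≤ A₁.rank + A₂.rank := by
  have h : fromRows A₁ A₂ = fromRows A₁ 0 + fromRows 0 A₂ := by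
    ext (i | i) j <;> simp
  have h1 : fromRows A₁ (0 : Matrix m₂ n F) = fromRows (1 : Matrix m₁ m₁ F) (0 : Matrix m₂ m₁ F) * A₁ := by
    rw [fromRows_mul]; simp [Matrix.one_mul]
  have h2 : fromRows (0 : Matrix m₁ n F) A₂ = fromRows (0 : Matrix m₁ m₂ F) (1 : Matrix m₂ m₂ F) * A₂ := by
    rw [fromRows_mul]; simp [Matrix.one_mul]
  calc (fromRows A₁ A₂).rank ≤ (fromRows A₁ 0).rank + (fromRows 0 A₂).rank := by
        rw [h]; exact myrank_add_le _ _
    _ ≤ A₁.rank + A₂.rank := by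
        rw [h1, h2]
        exact add_le_add (rank_mul_le_right _ _) (rank_mul_le_right _ _)

lemma myrank_fromCols_le {F : Type*} [Field F] {m n₁ n₂ : Type*} [Fintype m] [Fintype n₁]
    [Fintype n₂] [DecidableEq n₁] [DecidableEq n₂] (A₁ : Matrix m n₁ F) (A₂ : Matrix m n₂ F) :
    (fromCols A₁ A₂).rank ≤ A₁.rank + A₂.rank := by
  have h : fromCols A₁ A₂ = fromCols A₁ 0 + fromCols 0 A₂ := by
    ext i (j | j) <;> simp
  have h1 : fromCols A₁ (0 : Matrix m n₂ F) = A₁ * fromCols (1 : Matrix n₁ n₁ F) (0 : Matrix n₁ n₂ F) := by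
    rw [mul_fromCols]; simp [Matrix.mul_one]
  have h2 : fromCols (0 : Matrix m n₁ F) A₂ = A₂ * fromCols (0 : Matrix n₂ n₁ F) (1 : Matrix n₂ n₂ F) := by
    rw [mul_fromCols]; simp [Matrix.mul_one]
  calc (fromCols A₁ A₂).rank ≤ (fromCols A₁ 0).rank + (fromCols 0 A₂).rank := by
        rw [h]; exact myrank_add_le _ _
    _ ≤ A₁.rank + A₂.rank := by
        rw [h1, h2]
        exact add_le_add (rank_mul_le_left _ _) (rank_mul_le_left _ _)

/-- Let `F` be a field, `C ∈ F^{r×r}` an invertible symmetric matrix,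
and `Q, P ∈ F^{m×r}`. The block matrix
`B = [[C, CPᵀ + Qᵀ], [PC + Q, PCPᵀ + PQᵀ + QPᵀ]]`
is symmetric and satisfies `rank(B) ≤ rank(C) + 2·rank(Q)`. -/
theorem stmt13 (F : Type*) [Field F] (r m : ℕ)
    (C : Matrix (Fin r) (Fin r) F) (hCsymm : C.IsSymm) (hCinv : IsUnit C.det)
    (Q P : Matrix (Fin m) (Fin r) F) :
    (Matrix.fromBlocks C (C * Pᵀ + Qᵀ) (P * C + Q) (P * C * Pᵀ + P * Qᵀ + Q * Pᵀ)).IsSymm ∧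
    (Matrix.fromBlocks C (C * Pᵀ + Qᵀ) (P * C + Q) (P * C * Pᵀ + P * Qᵀ + Q * Pᵀ)).rank ≤
      C.rank + 2 * Q.rank := by
  have hC : Cᵀ = C := hCsymm
  constructor
  · apply Matrix.IsSymm.fromBlocks hCsymm
    · simp [transpose_add, transpose_mul, hC]
    · unfold Matrix.IsSymm
      simp only [transpose_add, transpose_mul, transpose_transpose, hC, Matrix.mul_assoc]
      abel
  · set L : Matrix (Fin r ⊕ Fin m) (Fin r ⊕ Fin m) F := fromBlocks 1 0 P 1 with hL
    set R : Matrix (Fin r ⊕ Fin m) (Fin r ⊕ Fin m) F := fromBlocks 1 Pᵀ 0 1 with hR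
    set M : Matrix (Fin r ⊕ Fin m) (Fin r ⊕ Fin m) F := fromBlocks C Qᵀ Q 0 with hM
    have hB : fromBlocks C (C * Pᵀ + Qᵀ) (P * C + Q) (P * C * Pᵀ + P * Qᵀ + Q * Pᵀ)
        = L * M * R := by
      rw [hL, hM, hR, fromBlocks_multiply, fromBlocks_multiply]
      congr 1 <;> simp [Matrix.mul_assoc, Matrix.add_mul] <;> abel
    have hLdet : IsUnit L.det := by
      rw [hL, det_fromBlocks_zero₁₂]; simp
    have hRdet : IsUnit R.det := by
      rw [hR, det_fromBlocks_zero₂₁]; simp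
    have hrank : (L * M * R).rank = M.rank := by
      rw [rank_mul_eq_left_of_isUnit_det _ _ hRdet, rank_mul_eq_right_of_isUnit_det _ _ hLdet]
    rw [hB, hrank, hM, ← fromRows_fromCols_eq_fromBlocks]
    calc (fromRows (fromCols C Qᵀ) (fromCols Q 0)).rank
        ≤ (fromCols C Qᵀ).rank + (fromCols Q (0 : Matrix (Fin m) (Fin m) F)).rank :=
          myrank_fromRows_le _ _
      _ ≤ (C.rank + Qᵀ.rank) + (Q.rank + (0 : Matrix (Fin m) (Fin m) F).rank) :=
          add_le_add (myrank_fromCols_le _ _) (myrank_fromCols_le _ _)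
      _ ≤ C.rank + 2 * Q.rank := by
          rw [rank_transpose, Matrix.rank_zero]
          omega
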